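/- Let μ : [0,∞) → [1,∞) be a differentiable growth rate with K_μ := sup_{t ≥ 0} μ'(t)/μ(t) < +∞, and let U : Δ → B(X) be an evolution operator with compatible projection valued function P satisfying ‖U_Q(s,t)Q(t)‖ ≤ M (μ'(t)/μ(t)) (μ(t)/μ(s))^{ω} μ(t)^α for all t > s ≥ 0, for some ω > 0, α ≥ 0, M ≥ 1. Assume that for some p ≥ 1, γ > α, ε ≥ 0 and D > 0 one has ∫₀^{t} (μ'(τ)/μ(τ)) (μ(t)/μ(τ))^{pγ} ‖U_Q(τ,t)Q(t)x‖^p dτ ≤ D μ(t)^{pε} ‖x‖^p for all t ≥ 0 and x ∈ X. Then for all t ≥ s+1, s ≥ 0 and x ∈ X: ‖U_Q(s,t)Q(t)x‖^p ≤ D M^p K_μ^{p−1} e^{K_μ(α+ω+γ)p} (μ(t)/μ(s))^{−p(γ+α)} μ(t)^{p(ε+α)} ‖x‖^p. -/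
import Mathlib


open Real MeasureTheory Filter

noncomputable section

/-- A growth rate: an increasing function `μ : [0,∞) → [1,∞)` with `μ 0 = 1` and
`μ t → ∞` as `t → ∞`. -/
def IsGrowthRate (μ : ℝ → ℝ) : Prop :=
  (∀ t, 0 ≤ t → 1 ≤ μ t) ∧ MonotoneOn μ (Set.Ici 0) ∧ μ 0 = 1 ∧
    Filter.Tendsto μ Filter.atTop Filter.atTop

variable {X : Type*} [NormedAddCommGroup X] [NormedSpace ℝ X]

/-- An evolution operator on `X`. -/
def IsEvolutionOperator (U : ℝ → ℝ → X →L[ℝ] X) : Prop :=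
  (∀ t, 0 ≤ t → U t t = 1) ∧
  (∀ s τ t, 0 ≤ s → s ≤ τ → τ ≤ t → (U t τ).comp (U τ s) = U t s) ∧
  (∀ x : X, ContinuousOn (fun q : ℝ × ℝ => U q.1 q.2 x) {q : ℝ × ℝ | 0 ≤ q.2 ∧ q.2 ≤ q.1})

/-- A (strongly continuous) projection valued function. -/
def IsProjectionValued (P : ℝ → X →L[ℝ] X) : Prop :=
  (∀ t, 0 ≤ t → (P t).comp (P t) = P t) ∧
  (∀ x : X, ContinuousOn (fun t => P t x) (Set.Ici 0))

/-- `P` is compatible with the evolution operator `U`; `V s t` plays the role of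
`U_Q(s,t)`, the inverse of the restriction `U(t,s)|_{Q(s)X} : Q(s)X → Q(t)X`,
where `Q t = 1 - P t`. -/
def CompatibleProjection (U V : ℝ → ℝ → X →L[ℝ] X) (P : ℝ → X →L[ℝ] X) : Prop :=
  (∀ s t, 0 ≤ s → s ≤ t → (P t).comp (U t s) = (U t s).comp (P s)) ∧
  (∀ s t, 0 ≤ s → s ≤ t → ∀ x : X,
    (1 - P s) (V s t ((1 - P t) x)) = V s t ((1 - P t) x)) ∧
  (∀ s t, 0 ≤ s → s ≤ t → ∀ x : X, U t s (V s t ((1 - P t) x)) = (1 - P t) x) ∧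
  (∀ s t, 0 ≤ s → s ≤ t → ∀ x : X, V s t (U t s ((1 - P s) x)) = (1 - P s) x)

/-- Nonuniform μ-dichotomy. -/
def NonuniformMuDichotomy (μ : ℝ → ℝ) (U V : ℝ → ℝ → X →L[ℝ] X)
    (P : ℝ → X →L[ℝ] X) : Prop :=
  ∃ a b ε N₁ N₂ : ℝ, 0 < a ∧ 0 < b ∧ 0 ≤ ε ∧ 1 ≤ N₁ ∧ 1 ≤ N₂ ∧
    ∀ s t, 0 ≤ s → s ≤ t →
      ‖(U t s).comp (P s)‖ ≤ N₁ * (μ t / μ s) ^ (-a) * μ s ^ ε ∧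
      ‖(V s t).comp (1 - P t)‖ ≤ N₂ * (μ t / μ s) ^ (-b) * μ t ^ ε

/-- Uniform μ-dichotomy (the case ε = 0). -/
def UniformMuDichotomy (μ : ℝ → ℝ) (U V : ℝ → ℝ → X →L[ℝ] X)
    (P : ℝ → X →L[ℝ] X) : Prop :=
  ∃ a b N₁ N₂ : ℝ, 0 < a ∧ 0 < b ∧ 1 ≤ N₁ ∧ 1 ≤ N₂ ∧
    ∀ s t, 0 ≤ s → s ≤ t →
      ‖(U t s).comp (P s)‖ ≤ N₁ * (μ t / μ s) ^ (-a) ∧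
      ‖(V s t).comp (1 - P t)‖ ≤ N₂ * (μ t / μ s) ^ (-b)

/-- The Green function associated to `U` and `P`:
`G(t,s) = U(t,s)P(s)` for `t > s` and `G(t,s) = -U_Q(t,s)Q(s)` for `t < s`. -/
def greenFunction (U V : ℝ → ℝ → X →L[ℝ] X) (P : ℝ → X →L[ℝ] X) (t s : ℝ) :
    X →L[ℝ] X :=
  if s < t then (U t s).comp (P s)
  else if t < s then -((V t s).comp (1 - P s))
  else 0

/-- Membership in the class `H^μ_{γ,p}(P)`. -/
def MemHClass (μ : ℝ → ℝ) (P : ℝ → X →L[ℝ] X) (γ p : ℝ) (H : ℝ → X →L[ℝ] X) : Prop :=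
  (∀ x : X, ContinuousOn (fun t => H t x) (Set.Ici 0)) ∧
  (∀ t, 0 ≤ t → ∀ x : X,
    ‖H t x‖ ≤ (deriv μ t / μ t) ^ (1 / p) * μ t ^ γ * ‖P t x‖ +
      (deriv μ t / μ t) ^ (1 / p) * μ t ^ (-γ) * ‖(1 - P t) x‖)


/-- The derivative of a function monotone on `[0, ∞)` is nonnegative at interior points. -/
lemma aux_deriv_nonneg {μ : ℝ → ℝ} (hmono : MonotoneOn μ (Set.Ici 0))
    {τ : ℝ} (hτ : 0 < τ) (hd : DifferentiableAt ℝ μ τ) : 0 ≤ deriv μ τ := by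
  have h := hd.hasDerivAt
  rw [hasDerivAt_iff_tendsto_slope] at h
  have h' : Filter.Tendsto (slope μ τ) (nhdsWithin τ (Set.Ioi τ)) (nhds (deriv μ τ)) :=
    h.mono_left (nhdsWithin_mono τ fun x hx => Set.mem_compl_singleton_iff.mpr (ne_of_gt hx))
  refine ge_of_tendsto h' ?_
  filter_upwards [self_mem_nhdsWithin] with x hx
  rw [slope_def_field]
  apply div_nonneg
  · exact sub_nonneg.2 (hmono (Set.mem_Ici.2 hτ.le)
      (Set.mem_Ici.2 (le_of_lt (lt_trans hτ hx))) (le_of_lt hx))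
  · have : τ < x := hx
    linarith

/-- Gronwall-type bound: `μ (s + 1) ≤ exp Kμ * μ s`. -/
lemma aux_mu_exp_bound (μ : ℝ → ℝ) (Kμ : ℝ)
    (hone : ∀ t, 0 ≤ t → 1 ≤ μ t)
    (hdiff : ∀ t, 0 ≤ t → DifferentiableAt ℝ μ t)
    (hKμ : ∀ t, 0 ≤ t → deriv μ t / μ t ≤ Kμ)
    {s : ℝ} (hs : 0 ≤ s) : μ (s + 1) ≤ Real.exp Kμ * μ s := by
  have hpos : ∀ r, 0 ≤ r → 0 < μ r := fun r hr => lt_of_lt_of_le one_pos (hone r hr)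
  obtain ⟨c, hc, hceq⟩ := exists_hasDerivAt_eq_slope (fun x => Real.log (μ x))
    (fun x => deriv μ x / μ x) (by linarith : s < s + 1)
    (fun x hx => (((hdiff x (le_trans hs hx.1)).continuousAt).log
      (ne_of_gt (hpos x (le_trans hs hx.1)))).continuousWithinAt)
    (fun x hx => ((hdiff x (le_trans hs hx.1.le)).hasDerivAt).log
      (ne_of_gt (hpos x (le_trans hs hx.1.le))))
  have hc0 : (0:ℝ) ≤ c := le_trans hs hc.1.le
  have hlog : Real.log (μ (s + 1)) - Real.log (μ s) ≤ Kμ := by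
    have h1 : deriv μ c / μ c ≤ Kμ := hKμ c hc0
    rw [hceq] at h1
    have h2 : s + 1 - s = (1:ℝ) := by ring
    rw [h2, div_one] at h1
    exact h1
  calc μ (s + 1) = Real.exp (Real.log (μ (s + 1))) := (Real.exp_log (hpos _ (by linarith))).symm
    _ ≤ Real.exp (Kμ + Real.log (μ s)) := Real.exp_le_exp.2 (by linarith)
    _ = Real.exp Kμ * μ s := by rw [Real.exp_add, Real.exp_log (hpos s hs)]

/-- The estimate \eqref{eq:maj-3} in the proof of Theorem 3.2: for `t ≥ s + 1`,
`‖U_Q(s,t)Q(t)x‖^p ≤ D M^p K_μ^{p-1} e^{K_μ(α+ω+γ)p} (μ(t)/μ(s))^{-p(γ+α)} μ(t)^{p(ε+α)} ‖x‖^p`. -/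
theorem unstable_pointwise_estimate_far
    {X : Type*} [NormedAddCommGroup X] [NormedSpace ℝ X] [CompleteSpace X]
    (μ : ℝ → ℝ) (Kμ : ℝ) (hgr : IsGrowthRate μ)
    (hdiff : ∀ t, 0 ≤ t → DifferentiableAt ℝ μ t)
    (hKμ : ∀ t, 0 ≤ t → deriv μ t / μ t ≤ Kμ)
    (U V : ℝ → ℝ → X →L[ℝ] X) (P : ℝ → X →L[ℝ] X)
    (hU : IsEvolutionOperator U) (hP : IsProjectionValued P)
    (hC : CompatibleProjection U V P)
    (M ω α : ℝ) (hω : 0 < ω) (hα : 0 ≤ α) (hM : 1 ≤ M)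
    (hVQ : ∀ s t, 0 ≤ s → s < t →
      ‖(V s t).comp (1 - P t)‖ ≤ M * (deriv μ t / μ t) * (μ t / μ s) ^ ω * μ t ^ α)
    (p γ ε D : ℝ) (hp : 1 ≤ p) (hγ : α < γ) (hε : 0 ≤ ε) (hD : 0 < D)
    (hint : ∀ t, 0 ≤ t → ∀ x : X,
      ∫⁻ τ in Set.Ioc (0 : ℝ) t, ENNReal.ofReal
          (deriv μ τ / μ τ * (μ t / μ τ) ^ (p * γ) * ‖V τ t ((1 - P t) x)‖ ^ p)
        ≤ ENNReal.ofReal (D * μ t ^ (p * ε) * ‖x‖ ^ p)) :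
    ∀ s t, 0 ≤ s → s + 1 ≤ t → ∀ x : X,
      ‖V s t ((1 - P t) x)‖ ^ p ≤
        D * M ^ p * Kμ ^ (p - 1) * Real.exp (Kμ * (α + ω + γ) * p) *
          (μ t / μ s) ^ (-(p * (γ + α))) * μ t ^ (p * (ε + α)) * ‖x‖ ^ p := by
  intro s t hs hst x
  obtain ⟨hone, hmono, hμ0, -⟩ := hgr
  have ht0 : (0:ℝ) ≤ t := by linarith
  have hμpos : ∀ r, 0 ≤ r → 0 < μ r := fun r hr => lt_of_lt_of_le one_pos (hone r hr)
  have hp0 : (0:ℝ) < p := lt_of_lt_of_le one_pos hp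
  have hM0 : (0:ℝ) ≤ M := le_trans zero_le_one hM
  have hKnn : (0:ℝ) ≤ Kμ :=
    le_trans (div_nonneg (aux_deriv_nonneg hmono one_pos (hdiff 1 zero_le_one))
      (hμpos 1 zero_le_one).le) (hKμ 1 zero_le_one)
  have hμs1 : μ (s + 1) ≤ Real.exp Kμ * μ s := aux_mu_exp_bound μ Kμ hone hdiff hKμ hs
  set y := (1 - P t) x with hy
  -- key identity: V s t y = V s τ ((1 - P τ) (V τ t y)) for s ≤ τ ≤ t
  have hkey : ∀ τ, s ≤ τ → τ ≤ t → V s t y = V s τ ((1 - P τ) (V τ t y)) := by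
    intro τ hsτ hτt
    have hτ0 : (0:ℝ) ≤ τ := le_trans hs hsτ
    have h1 : (1 - P τ) (V τ t y) = V τ t y := hC.2.1 τ t hτ0 hτt x
    have hz : (1 - P s) (V s τ ((1 - P τ) (V τ t y))) = V s τ ((1 - P τ) (V τ t y)) :=
      hC.2.1 s τ hs hsτ (V τ t y)
    have h2 : U τ s (V s τ ((1 - P τ) (V τ t y))) = (1 - P τ) (V τ t y) :=
      hC.2.2.1 s τ hs hsτ (V τ t y)
    have h3 : U t τ (V τ t y) = y := hC.2.2.1 τ t hτ0 hτt x
    have hcoc : (U t τ).comp (U τ s) = U t s := hU.2.1 s τ t hs hsτ hτt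
    have h4 : U t s (V s τ ((1 - P τ) (V τ t y))) = y := by
      have h5 := congrArg (fun (L : X →L[ℝ] X) => L (V s τ ((1 - P τ) (V τ t y)))) hcoc
      simp only [ContinuousLinearMap.comp_apply] at h5
      rw [← h5, h2, h1, h3]
    have h6 : V s t (U t s ((1 - P s) (V s τ ((1 - P τ) (V τ t y))))) =
        (1 - P s) (V s τ ((1 - P τ) (V τ t y))) :=
      hC.2.2.2 s t hs (le_trans hsτ hτt) (V s τ ((1 - P τ) (V τ t y)))
    rw [hz, h4] at h6
    exact h6
  set C := M ^ p * Kμ ^ (p - 1) * Real.exp (Kμ * (α + ω + γ) * p) *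
      (μ t / μ s) ^ (-(p * (γ + α))) * μ t ^ (p * α) with hCdef
  have hapos : (0:ℝ) < μ s := hμpos s hs
  have hcpos : (0:ℝ) < μ t := hμpos t ht0
  -- pointwise estimate on (s, s+1]
  have hpt : ∀ τ ∈ Set.Ioc s (s + 1),
      ‖V s t y‖ ^ p ≤ C * (deriv μ τ / μ τ * (μ t / μ τ) ^ (p * γ) * ‖V τ t y‖ ^ p) := by
    intro τ hτ
    obtain ⟨hsτ, hτ1⟩ := hτ
    have hτ0 : (0:ℝ) < τ := lt_of_le_of_lt hs hsτ
    have hτt : τ ≤ t := le_trans hτ1 hst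
    have hbpos : (0:ℝ) < μ τ := hμpos τ hτ0.le
    have hab : μ s ≤ μ τ := hmono (Set.mem_Ici.2 hs) (Set.mem_Ici.2 hτ0.le) hsτ.le
    have hbc : μ τ ≤ μ t := hmono (Set.mem_Ici.2 hτ0.le) (Set.mem_Ici.2 ht0) hτt
    have hbr : μ τ ≤ Real.exp Kμ * μ s :=
      le_trans (hmono (Set.mem_Ici.2 hτ0.le) (Set.mem_Ici.2 (by linarith)) hτ1) hμs1
    have hA0 : (0:ℝ) ≤ deriv μ τ / μ τ :=
      div_nonneg (aux_deriv_nonneg hmono hτ0 (hdiff τ hτ0.le)) hbpos.le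
    have hAK : deriv μ τ / μ τ ≤ Kμ := hKμ τ hτ0.le
    have hB1 : (0:ℝ) ≤ (μ τ / μ s) ^ ω := Real.rpow_nonneg (div_nonneg hbpos.le hapos.le) ω
    have hB2 : (0:ℝ) ≤ μ τ ^ α := Real.rpow_nonneg hbpos.le α
    have h1 : ‖V s t y‖ ≤ M * (deriv μ τ / μ τ) * (μ τ / μ s) ^ ω * μ τ ^ α * ‖V τ t y‖ := by
      rw [hkey τ hsτ.le hτt]
      calc ‖V s τ ((1 - P τ) (V τ t y))‖
          = ‖((V s τ).comp (1 - P τ)) (V τ t y)‖ := by rw [ContinuousLinearMap.comp_apply]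
        _ ≤ ‖(V s τ).comp (1 - P τ)‖ * ‖V τ t y‖ := ContinuousLinearMap.le_opNorm _ _
        _ ≤ _ := mul_le_mul_of_nonneg_right (hVQ s τ hs hsτ) (norm_nonneg _)
    have h2 : ‖V s t y‖ ^ p ≤
        (M * (deriv μ τ / μ τ) * (μ τ / μ s) ^ ω * μ τ ^ α * ‖V τ t y‖) ^ p :=
      Real.rpow_le_rpow (norm_nonneg _) h1 hp0.le
    have hexp : (M * (deriv μ τ / μ τ) * (μ τ / μ s) ^ ω * μ τ ^ α * ‖V τ t y‖) ^ p =
        M ^ p * (deriv μ τ / μ τ) ^ p * ((μ τ / μ s) ^ ω) ^ p * (μ τ ^ α) ^ p * ‖V τ t y‖ ^ p := by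
      rw [Real.mul_rpow (mul_nonneg (mul_nonneg (mul_nonneg hM0 hA0) hB1) hB2) (norm_nonneg _),
        Real.mul_rpow (mul_nonneg (mul_nonneg hM0 hA0) hB1) hB2,
        Real.mul_rpow (mul_nonneg hM0 hA0) hB1, Real.mul_rpow hM0 hA0]
    have hApow : (deriv μ τ / μ τ) ^ p ≤ Kμ ^ (p - 1) * (deriv μ τ / μ τ) := by
      have h7 : (deriv μ τ / μ τ) ^ p =
          (deriv μ τ / μ τ) ^ (p - 1) * (deriv μ τ / μ τ) ^ (1:ℝ) := by
        rw [← Real.rpow_add_of_nonneg hA0 (by linarith) zero_le_one]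
        norm_num
      rw [h7, Real.rpow_one]
      exact mul_le_mul_of_nonneg_right (Real.rpow_le_rpow hA0 hAK (by linarith)) hA0
    have h6 : ((μ τ / μ s) ^ ω) ^ p * (μ τ ^ α) ^ p ≤
        Real.exp (Kμ * (α + ω + γ) * p) * (μ t / μ s) ^ (-(p * (γ + α))) * μ t ^ (p * α) *
          (μ t / μ τ) ^ (p * γ) := by
      rw [← Real.rpow_mul (div_nonneg hbpos.le hapos.le), ← Real.rpow_mul hbpos.le]
      have hlb : Real.log (μ τ) - Real.log (μ s) ≤ Kμ := by
        have h8 : Real.log (μ τ) ≤ Real.log (Real.exp Kμ * μ s) :=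
          Real.log_le_log hbpos hbr
        rw [Real.log_mul (Real.exp_ne_zero Kμ) (ne_of_gt hapos), Real.log_exp] at h8
        linarith
      have key : (0:ℝ) ≤ p * (α + ω + γ) * (Kμ - (Real.log (μ τ) - Real.log (μ s))) :=
        mul_nonneg (mul_nonneg hp0.le (by linarith)) (by linarith)
      rw [Real.rpow_def_of_pos (div_pos hbpos hapos), Real.rpow_def_of_pos hbpos,
        Real.rpow_def_of_pos (div_pos hcpos hapos), Real.rpow_def_of_pos hcpos,
        Real.rpow_def_of_pos (div_pos hcpos hbpos), ← Real.exp_add, ← Real.exp_add,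
        ← Real.exp_add, ← Real.exp_add, Real.exp_le_exp,
        Real.log_div (ne_of_gt hbpos) (ne_of_gt hapos),
        Real.log_div (ne_of_gt hcpos) (ne_of_gt hapos),
        Real.log_div (ne_of_gt hcpos) (ne_of_gt hbpos)]
      nlinarith [key]
    have hstep : M ^ p * (deriv μ τ / μ τ) ^ p *
          (((μ τ / μ s) ^ ω) ^ p * (μ τ ^ α) ^ p) * ‖V τ t y‖ ^ p ≤
        M ^ p * (Kμ ^ (p - 1) * (deriv μ τ / μ τ)) *
          (Real.exp (Kμ * (α + ω + γ) * p) * (μ t / μ s) ^ (-(p * (γ + α))) * μ t ^ (p * α) *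
            (μ t / μ τ) ^ (p * γ)) * ‖V τ t y‖ ^ p := by
      apply mul_le_mul_of_nonneg_right _ (Real.rpow_nonneg (norm_nonneg _) p)
      exact mul_le_mul (mul_le_mul_of_nonneg_left hApow (Real.rpow_nonneg hM0 p)) h6
        (mul_nonneg (Real.rpow_nonneg hB1 p) (Real.rpow_nonneg hB2 p))
        (mul_nonneg (Real.rpow_nonneg hM0 p) (mul_nonneg (Real.rpow_nonneg hKnn (p - 1)) hA0))
    calc ‖V s t y‖ ^ p
        ≤ (M * (deriv μ τ / μ τ) * (μ τ / μ s) ^ ω * μ τ ^ α * ‖V τ t y‖) ^ p := h2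
      _ = M ^ p * (deriv μ τ / μ τ) ^ p * (((μ τ / μ s) ^ ω) ^ p * (μ τ ^ α) ^ p) *
          ‖V τ t y‖ ^ p := by rw [hexp]; ring
      _ ≤ M ^ p * (Kμ ^ (p - 1) * (deriv μ τ / μ τ)) *
          (Real.exp (Kμ * (α + ω + γ) * p) * (μ t / μ s) ^ (-(p * (γ + α))) * μ t ^ (p * α) *
            (μ t / μ τ) ^ (p * γ)) * ‖V τ t y‖ ^ p := hstep
      _ = C * (deriv μ τ / μ τ * (μ t / μ τ) ^ (p * γ) * ‖V τ t y‖ ^ p) := by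
          rw [hCdef]; ring
  have hC0 : (0:ℝ) ≤ C := by
    rw [hCdef]
    exact mul_nonneg (mul_nonneg (mul_nonneg (mul_nonneg (Real.rpow_nonneg hM0 p)
      (Real.rpow_nonneg hKnn (p - 1))) (Real.exp_nonneg _))
      (Real.rpow_nonneg (div_nonneg hcpos.le hapos.le) _)) (Real.rpow_nonneg hcpos.le _)
  have hsub : Set.Ioc s (s + 1) ⊆ Set.Ioc 0 t := fun τ hτ =>
    ⟨lt_of_le_of_lt hs hτ.1, le_trans hτ.2 hst⟩
  have keyE : ENNReal.ofReal (‖V s t y‖ ^ p) ≤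
      ENNReal.ofReal (C * (D * μ t ^ (p * ε) * ‖x‖ ^ p)) := by
    calc ENNReal.ofReal (‖V s t y‖ ^ p)
        = ∫⁻ _ in Set.Ioc s (s + 1), ENNReal.ofReal (‖V s t y‖ ^ p) := by
          rw [setLIntegral_const, Real.volume_Ioc]
          norm_num
      _ ≤ ∫⁻ τ in Set.Ioc s (s + 1), ENNReal.ofReal
            (C * (deriv μ τ / μ τ * (μ t / μ τ) ^ (p * γ) * ‖V τ t y‖ ^ p)) :=
          setLIntegral_mono' measurableSet_Ioc fun τ hτ => ENNReal.ofReal_le_ofReal (hpt τ hτ)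
      _ ≤ ∫⁻ τ in Set.Ioc 0 t, ENNReal.ofReal
            (C * (deriv μ τ / μ τ * (μ t / μ τ) ^ (p * γ) * ‖V τ t y‖ ^ p)) :=
          lintegral_mono_set hsub
      _ = ∫⁻ τ in Set.Ioc 0 t, ENNReal.ofReal C * ENNReal.ofReal
            (deriv μ τ / μ τ * (μ t / μ τ) ^ (p * γ) * ‖V τ t y‖ ^ p) := by
          simp_rw [ENNReal.ofReal_mul hC0]
      _ = ENNReal.ofReal C * ∫⁻ τ in Set.Ioc 0 t, ENNReal.ofReal
            (deriv μ τ / μ τ * (μ t / μ τ) ^ (p * γ) * ‖V τ t y‖ ^ p) :=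
          lintegral_const_mul' _ _ ENNReal.ofReal_ne_top
      _ ≤ ENNReal.ofReal C * ENNReal.ofReal (D * μ t ^ (p * ε) * ‖x‖ ^ p) :=
          mul_le_mul_right (hint t ht0 x) _
      _ = ENNReal.ofReal (C * (D * μ t ^ (p * ε) * ‖x‖ ^ p)) :=
          (ENNReal.ofReal_mul hC0).symm
  have hrhs0 : (0:ℝ) ≤ C * (D * μ t ^ (p * ε) * ‖x‖ ^ p) :=
    mul_nonneg hC0 (mul_nonneg (mul_nonneg hD.le (Real.rpow_nonneg hcpos.le _))
      (Real.rpow_nonneg (norm_nonneg _) _))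
  have hfin : ‖V s t y‖ ^ p ≤ C * (D * μ t ^ (p * ε) * ‖x‖ ^ p) :=
    (ENNReal.ofReal_le_ofReal_iff hrhs0).1 keyE
  calc ‖V s t y‖ ^ p ≤ C * (D * μ t ^ (p * ε) * ‖x‖ ^ p) := hfin
    _ = D * M ^ p * Kμ ^ (p - 1) * Real.exp (Kμ * (α + ω + γ) * p) *
        (μ t / μ s) ^ (-(p * (γ + α))) * μ t ^ (p * (ε + α)) * ‖x‖ ^ p := by
      rw [hCdef, show p * (ε + α) = p * ε + p * α by ring, Real.rpow_add hcpos]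
      ring
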